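/- Let G be a finitely generated profinite group and g ∈ G. Then g lies in no minimal topological generating set of G of size at least 2 if and only if either G is topologically generated by g alone or g belongs to the Frattini subgroup of G. -/

import Mathlib

open scoped Pointwise


/-- The Frattini subgroup of a profinite group: the intersection of all maximal
open subgroups. -/
def frattiniOpen (G : Type*) [Group G] [TopologicalSpace G] : Subgroup G :=
  sInf {M : Subgroup G | IsOpen (M : Set G) ∧ IsCoatom M}

/-- Every proper open subgroup of a compact group is contained in an open coatom. -/
lemma exists_open_coatom_of_isOpen {G : Type*} [Group G] [TopologicalSpace G]
    [ContinuousMul G] [CompactSpace G] {K : Subgroup G} (hKo : IsOpen (K : Set G))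
    (hK : K ≠ ⊤) : ∃ M : Subgroup G, IsOpen (M : Set G) ∧ IsCoatom M ∧ K ≤ M := by
  have hfin : ∀ L : Subgroup G, IsOpen (L : Set G) → L.FiniteIndex := fun L hL =>
    haveI := Subgroup.quotient_finite_of_isOpen L hL
    L.finiteIndex_of_finite_quotient
  obtain ⟨n, ⟨M, ⟨hMo, hMne, hKM⟩, rfl⟩, hmin⟩ :=
    Nat.lt_wfRel.wf.has_min
      {n | ∃ L : Subgroup G, (IsOpen (L : Set G) ∧ L ≠ ⊤ ∧ K ≤ L) ∧ L.index = n}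
      ⟨K.index, K, ⟨hKo, hK, le_rfl⟩, rfl⟩
  refine ⟨M, hMo, ⟨hMne, fun K' hlt => ?_⟩, hKM⟩
  by_contra hne
  have hK'o : IsOpen ((K' : Set G)) := Subgroup.isOpen_mono hlt.le hMo
  haveI hMfi : M.FiniteIndex := hfin M hMo
  haveI hK'fi : K'.FiniteIndex := hfin K' hK'o
  have hrel : M.relIndex K' * K'.index = M.index := Subgroup.relIndex_mul_index hlt.le
  have hr1 : M.relIndex K' ≠ 1 := fun h => hlt.ne' (le_antisymm
    (Subgroup.relIndex_eq_one.mp h) hlt.le)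
  have hr0 : M.relIndex K' ≠ 0 := by
    intro h
    exact hMfi.index_ne_zero (by rw [← hrel, h, zero_mul])
  have hKi0 : K'.index ≠ 0 := hK'fi.index_ne_zero
  have hless : K'.index < M.index := by
    rw [← hrel]
    have h2 : 2 ≤ M.relIndex K' := by omega
    calc K'.index < 2 * K'.index := by omega
      _ ≤ M.relIndex K' * K'.index := Nat.mul_le_mul_right _ h2
  exact hmin K'.index ⟨K', ⟨hK'o, hne, hKM.trans hlt.le⟩, rfl⟩ hless

/-- Every proper closed subgroup of a profinite group is contained in an open coatom. -/
lemma exists_open_coatom_of_isClosed {G : Type*} [Group G] [TopologicalSpace G]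
    [IsTopologicalGroup G] [CompactSpace G] [TotallyDisconnectedSpace G]
    {H : Subgroup G} (hHc : IsClosed (H : Set G)) (hH : H ≠ ⊤) :
    ∃ M : Subgroup G, IsOpen (M : Set G) ∧ IsCoatom M ∧ H ≤ M := by
  haveI : T2Space G := IsTopologicalGroup.t2Space_iff_one_closed.mpr isClosed_singleton
  obtain ⟨x, hx⟩ : ∃ x : G, x ∉ H := by
    by_contra h
    push_neg at h
    exact hH ((Subgroup.eq_top_iff' H).mpr h)
  have hC : IsClosed ((x * ·) '' (H : Set G)) := (Homeomorph.mulLeft x).isClosedMap _ hHc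
  have h1 : (1 : G) ∈ ((x * ·) '' (H : Set G))ᶜ := by
    rintro ⟨h, hh, hxh⟩
    simp only at hxh
    apply hx
    have hxi : x = h⁻¹ := eq_inv_of_mul_eq_one_left hxh
    rw [hxi]
    exact inv_mem hh
  obtain ⟨V, hV, h1V, hVsub⟩ := compact_exists_isClopen_in_isOpen hC.isOpen_compl h1
  obtain ⟨N, hN⟩ := IsTopologicalGroup.exist_openNormalSubgroup_sub_clopen_nhds_of_one hV h1V
  haveI : (N.toSubgroup).Normal := N.isNormal'
  set K : Subgroup G := N.toSubgroup ⊔ H with hKdef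
  have hKopen : IsOpen (K : Set G) := Subgroup.isOpen_mono le_sup_left N.isOpen
  have hxK : x ∉ K := by
    intro hxmem
    have hx2 : x ∈ (N.toSubgroup : Set G) * (H : Set G) := by
      rw [← Subgroup.normal_mul]; exact hxmem
    obtain ⟨n, hn, h, hh, heq⟩ := Set.mem_mul.mp hx2
    have hnc : n ∈ ((x * ·) '' (H : Set G))ᶜ := hVsub (hN hn)
    exact hnc ⟨h⁻¹, inv_mem hh, by simp only []; rw [← heq, mul_inv_cancel_right]⟩
  have hKne : K ≠ ⊤ := fun h => hxK (h ▸ Subgroup.mem_top x)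
  obtain ⟨M, hMo, hMco, hKM⟩ := exists_open_coatom_of_isOpen hKopen hKne
  exact ⟨M, hMo, hMco, le_sup_right.trans hKM⟩

/-- In a finitely generated profinite group, `g` lies in no minimal
topological generating set of size at least 2 iff `g` topologically generates `G` or
`g` lies in the Frattini subgroup of `G`. -/
theorem isolated_in_independence_graph_iff
    {G : Type*} [Group G] [TopologicalSpace G] [IsTopologicalGroup G]
    [CompactSpace G] [TotallyDisconnectedSpace G]
    (hfg : ∃ S : Finset G, (Subgroup.closure (S : Set G)).topologicalClosure = ⊤)
    (g : G) :
    (¬ ∃ Y : Finset G, g ∈ Y ∧ 2 ≤ Y.card ∧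
        (Subgroup.closure (Y : Set G)).topologicalClosure = ⊤ ∧
        ∀ Z : Finset G, Z ⊂ Y → (Subgroup.closure (Z : Set G)).topologicalClosure ≠ ⊤) ↔
      ((Subgroup.zpowers g).topologicalClosure = ⊤ ∨ g ∈ frattiniOpen G) := by
  classical
  constructor
  · intro hno
    by_contra hcon
    push_neg at hcon
    obtain ⟨hg1, hg2⟩ := hcon
    rw [frattiniOpen, Subgroup.mem_sInf] at hg2
    push_neg at hg2
    obtain ⟨M, ⟨hMo, hMco⟩, hgM⟩ := hg2
    have hMclosed : IsClosed (M : Set G) := Subgroup.isClosed_of_isOpen M hMo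
    -- the abstract subgroup generated by M and g is everything
    have htop : Subgroup.closure ((M : Set G) ∪ {g}) = ⊤ := by
      apply hMco.2
      have hle : M ≤ Subgroup.closure ((M : Set G) ∪ {g}) :=
        fun y hy => Subgroup.subset_closure (Set.mem_union_left _ hy)
      refine lt_of_le_of_ne hle fun h => hgM ?_
      rw [h]
      exact Subgroup.subset_closure (Set.mem_union_right _ rfl)
    -- directed family of finitely generated approximations
    set ι := {X : Finset G // (X : Set G) ⊆ (M : Set G)} with hι
    haveI : Nonempty ι := ⟨⟨∅, by simp⟩⟩
    set f : ι → Subgroup G := fun X => Subgroup.closure ((X : Finset G) ∪ {g} : Set G) with hf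
    have hdir : Directed (· ≤ ·) f := by
      rintro ⟨X, hX⟩ ⟨Y, hY⟩
      refine ⟨⟨X ∪ Y, by push_cast; exact Set.union_subset hX hY⟩,
        Subgroup.closure_mono (Set.union_subset_union_left _ ?_),
        Subgroup.closure_mono (Set.union_subset_union_left _ ?_)⟩ <;>
      · push_cast
        first
          | exact Set.subset_union_left
          | exact Set.subset_union_right
    have hsup : ⨆ X : ι, f X = ⊤ := by
      rw [← htop]
      apply le_antisymm
      · refine iSup_le fun X => Subgroup.closure_mono ?_
        exact Set.union_subset_union_left _ X.2
      · rw [Subgroup.closure_le]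
        rintro y (hy | hy)
        · exact SetLike.le_def.mp (le_iSup f ⟨{y}, by simpa using hy⟩)
            (Subgroup.subset_closure (by simp))
        · exact SetLike.le_def.mp (le_iSup f ⟨∅, by simp⟩)
            (Subgroup.subset_closure (by simp [hy]))
    obtain ⟨S, hS⟩ := hfg
    -- find a finite subset of M which together with g generates (topologically)
    have hmem : ∀ s ∈ S, ∃ X : ι, s ∈ f X := by
      intro s _
      have : s ∈ ⨆ X : ι, f X := hsup ▸ Subgroup.mem_top s
      exact (Subgroup.mem_iSup_of_directed hdir).mp this
    choose F hF using hmem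
    set X₀ : Finset G := S.attach.biUnion (fun s => (F s.1 s.2 : ι).1) with hX₀
    have hX₀M : (X₀ : Set G) ⊆ (M : Set G) := by
      intro y hy
      simp only [hX₀, Finset.coe_biUnion, Set.mem_iUnion] at hy
      obtain ⟨s, _, hs⟩ := hy
      exact (F s.1 s.2).2 hs
    have hSX₀ : (S : Set G) ⊆ (Subgroup.closure ((X₀ : Set G) ∪ {g}) : Set G) := by
      intro s hs
      have h1 : s ∈ f (F s hs) := hF s hs
      refine SetLike.le_def.mp (Subgroup.closure_mono ?_) h1
      apply Set.union_subset_union_left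
      intro y hy
      simp only [hX₀, Finset.coe_biUnion, Set.mem_iUnion]
      exact ⟨⟨s, hs⟩, Finset.mem_attach _ _, hy⟩
    set T : Finset G := insert g X₀ with hT
    have hcoe : (T : Set G) = (X₀ : Set G) ∪ {g} := by
      rw [hT, Finset.coe_insert, Set.insert_eq, Set.union_comm]
    have hTgen : (Subgroup.closure (T : Set G)).topologicalClosure = ⊤ := by
      rw [eq_top_iff, ← hS]
      refine Subgroup.topologicalClosure_minimal _
        (le_trans ?_ (Subgroup.le_topologicalClosure _))
        (Subgroup.isClosed_topologicalClosure _)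
      rw [Subgroup.closure_le, hcoe]
      exact hSX₀
    -- pick a generating subset of T containing g of minimal cardinality
    obtain ⟨n, ⟨Y, ⟨hgY, hYT, hYgen⟩, rfl⟩, hminc⟩ :=
      Nat.lt_wfRel.wf.has_min
        {n | ∃ Y : Finset G, (g ∈ Y ∧ Y ⊆ T ∧
          (Subgroup.closure (Y : Set G)).topologicalClosure = ⊤) ∧ Y.card = n}
        ⟨T.card, T, ⟨Finset.mem_insert_self g X₀, le_rfl, hTgen⟩, rfl⟩
    apply hno
    refine ⟨Y, hgY, ?_, hYgen, ?_⟩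
    · -- card at least 2
      rcases Nat.lt_or_ge Y.card 2 with h | h
      · exfalso
        have h1 : 1 ≤ Y.card := Finset.card_pos.mpr ⟨g, hgY⟩
        have : Y = {g} := by
          have := Finset.card_eq_one.mp (show Y.card = 1 by omega)
          obtain ⟨a, rfl⟩ := this
          simp only [Finset.mem_singleton] at hgY
          rw [hgY]
        rw [this] at hYgen
        apply hg1
        rw [Subgroup.zpowers_eq_closure]
        simpa using hYgen
      · exact h
    · -- minimality
      intro Z hZY hZgen
      by_cases hgZ : g ∈ Z
      · exact hminc Z.card ⟨Z, ⟨hgZ, hZY.subset.trans hYT, hZgen⟩, rfl⟩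
          (Finset.card_lt_card hZY)
      · -- Z ⊆ M
        have hZM : (Z : Set G) ⊆ (M : Set G) := by
          intro z hz
          have hzY : z ∈ Y := hZY.subset hz
          have hzT : z ∈ T := hYT hzY
          rcases Finset.mem_insert.mp hzT with rfl | hzX
          · exact absurd hz hgZ
          · exact hX₀M hzX
        have : (Subgroup.closure (Z : Set G)).topologicalClosure ≤ M :=
          Subgroup.topologicalClosure_minimal _
            ((Subgroup.closure_le _).mpr hZM) hMclosed
        exact hMco.1 (top_le_iff.mp (hZgen ▸ this))
  · rintro (h | h) ⟨Y, hgY, hcard, hgen, hmin⟩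
    · -- g alone generates: {g} is a proper subset of Y that generates
      refine hmin {g} ?_ ?_
      · refine Finset.ssubset_iff_subset_ne.mpr
          ⟨Finset.singleton_subset_iff.mpr hgY, fun hc => ?_⟩
        rw [← hc] at hcard
        simp at hcard
      · rw [Finset.coe_singleton, ← Subgroup.zpowers_eq_closure]
        exact h
    · -- g in Frattini: erase g from Y
      have hZ : Y.erase g ⊂ Y := Finset.erase_ssubset hgY
      have hne : (Subgroup.closure ((Y.erase g : Finset G) : Set G)).topologicalClosure ≠ ⊤ :=
        hmin _ hZ
      obtain ⟨M, hMo, hMco, hHM⟩ := exists_open_coatom_of_isClosed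
        (Subgroup.isClosed_topologicalClosure _) hne
      have hgM : g ∈ M := Subgroup.mem_sInf.mp h M ⟨hMo, hMco⟩
      have hYM : (Y : Set G) ⊆ (M : Set G) := by
        intro y hy
        rcases eq_or_ne y g with rfl | hyg
        · exact hgM
        · have : y ∈ Y.erase g := Finset.mem_erase.mpr ⟨hyg, hy⟩
          exact hHM (SetLike.le_def.mp (Subgroup.le_topologicalClosure _)
            (Subgroup.subset_closure (by exact_mod_cast this)))
      have : (Subgroup.closure (Y : Set G)).topologicalClosure ≤ M :=
        Subgroup.topologicalClosure_minimal _ ((Subgroup.closure_le _).mpr hYM)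
          (Subgroup.isClosed_of_isOpen M hMo)
      exact hMco.1 (top_le_iff.mp (hgen ▸ this))
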